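/- arXiv:1808.08699 — 4 statements merged into one kernel-verified Lean document; each statement's English description precedes it below -/
import Mathlib

section
/- For all m ≥ 1, n ≥ 1, k ∈ ℕ, the m-nested power sum admits the closed form S(m, n, k) = Σ_{r=1}^{n} C(n - r + m - 1, m - 1) · r^k, i.e., the coefficient of r^k in the m-nested sum is the binomial coefficient C(n - r + m - 1, m - 1). -/
open Finset Nat

def S : ℕ → ℕ → ℕ → ℕ
  | 0, n, k => n ^ k
  | m + 1, n, k => ∑ r ∈ Finset.Icc 1 n, S m r k

lemma hockey (a t : ℕ) : ∑ i ∈ Finset.range t, Nat.choose (i + a) a = Nat.choose (t + a) (a + 1) := by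
  induction t with
  | zero => simp
  | succ t ih =>
      rw [Finset.sum_range_succ, ih, show t + 1 + a = (t + a) + 1 from by omega,
        Nat.choose_succ_succ, add_comm]

lemma key (m r n : ℕ) (hr : 1 ≤ r) (hrn : r ≤ n) :
    ∑ j ∈ Finset.Icc r n, Nat.choose (j - r + m) m = Nat.choose (n - r + m + 1) (m + 1) := by
  rw [← Finset.Ico_add_one_right_eq_Icc, Finset.sum_Ico_eq_sum_range]
  have h : ∀ i, r + i - r + m = i + m := by intro i; omega
  simp only [h]
  rw [hockey]
  congr 1
  omega

theorem stmt1 (m n k : ℕ) (hm : 1 ≤ m) (hn : 1 ≤ n) :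
    S m n k = ∑ r ∈ Finset.Icc 1 n, Nat.choose (n - r + m - 1) (m - 1) * r ^ k := by
  induction m generalizing n with
  | zero => omega
  | succ m ih =>
      match m, ih with
      | 0, _ => simp [S]
      | m + 1, ih =>
        have ih' := fun n hn => ih n (by omega) hn
        calc S (m + 2) n k = ∑ j ∈ Finset.Icc 1 n, S (m + 1) j k := rfl
          _ = ∑ j ∈ Finset.Icc 1 n, ∑ r ∈ Finset.Icc 1 j,
                Nat.choose (j - r + m) m * r ^ k := by
              refine Finset.sum_congr rfl fun j hj => ?_
              rw [ih' j (Finset.mem_Icc.mp hj).1]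
              simp
          _ = ∑ r ∈ Finset.Icc 1 n, ∑ j ∈ Finset.Icc r n,
                Nat.choose (j - r + m) m * r ^ k := by
              simp only [← Finset.Ico_add_one_right_eq_Icc]
              exact (Finset.sum_Ico_Ico_comm 1 (n + 1)
                (fun r j => Nat.choose (j - r + m) m * r ^ k)).symm
          _ = ∑ r ∈ Finset.Icc 1 n, Nat.choose (n - r + m + 1) (m + 1) * r ^ k := by
              refine Finset.sum_congr rfl fun r hr => ?_
              obtain ⟨hr1, hrn⟩ := Finset.mem_Icc.mp hr
              rw [← Finset.sum_mul, key m r n hr1 hrn]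
          _ = ∑ r ∈ Finset.Icc 1 n, Nat.choose (n - r + (m + 2) - 1) (m + 2 - 1) * r ^ k := by
              refine Finset.sum_congr rfl fun r hr => ?_
              congr 1 <;> omega
end

section
/- For all m ≥ 1, n ≥ 2, k ∈ ℕ: S(m, n, k+1) = n · S(m, n, k) − m · S(m+1, n−1, k). -/
open Finset Nat

lemma abelAux (a : ℕ → ℕ) :
    ∀ n, n * ∑ r ∈ Icc 1 n, a r
      = (∑ r ∈ Icc 1 n, r * a r) + ∑ r ∈ Icc 1 (n - 1), ∑ s ∈ Icc 1 r, a s := by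
  intro n
  induction n with
  | zero => simp
  | succ n ih =>
    rw [Nat.succ_sub_one]
    cases n with
    | zero => simp
    | succ p =>
      rw [Nat.succ_sub_one] at ih
      have e1 : ∑ r ∈ Icc 1 (p + 1 + 1), a r
          = (∑ r ∈ Icc 1 (p + 1), a r) + a (p + 1 + 1) :=
        Finset.sum_Icc_succ_top (by omega) _
      have e2 : ∑ r ∈ Icc 1 (p + 1 + 1), r * a r
          = (∑ r ∈ Icc 1 (p + 1), r * a r) + (p + 1 + 1) * a (p + 1 + 1) :=
        Finset.sum_Icc_succ_top (by omega) _
      have e3 : ∑ r ∈ Icc 1 (p + 1), (∑ s ∈ Icc 1 r, a s)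
          = (∑ r ∈ Icc 1 p, ∑ s ∈ Icc 1 r, a s) + ∑ s ∈ Icc 1 (p + 1), a s :=
        Finset.sum_Icc_succ_top (by omega) _
      rw [e1, e2, e3]
      have h2 : (p + 1 + 1) * ((∑ r ∈ Icc 1 (p + 1), a r) + a (p + 1 + 1))
          = (p + 1) * (∑ r ∈ Icc 1 (p + 1), a r) + (∑ r ∈ Icc 1 (p + 1), a r)
            + (p + 1 + 1) * a (p + 1 + 1) := by ring
      rw [h2, ih]
      ring

lemma shiftAux (f : ℕ → ℕ) (hf : f 0 = 0) :
    ∀ n, ∑ r ∈ Icc 1 n, f (r - 1) = ∑ r ∈ Icc 1 (n - 1), f r := by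
  intro n
  induction n with
  | zero => simp
  | succ n ih =>
    rw [Nat.succ_sub_one, Finset.sum_Icc_succ_top (by omega : 1 ≤ n + 1), ih,
        Nat.add_sub_cancel]
    cases n with
    | zero => simp [hf]
    | succ p =>
      rw [Nat.succ_sub_one]
      rw [Finset.sum_Icc_succ_top (by omega : 1 ≤ p + 1)]

lemma keyL : ∀ m n k : ℕ, n * S m n k = S m n (k + 1) + m * S (m + 1) (n - 1) k := by
  intro m
  induction m with
  | zero => intro n k; simp [S, pow_succ, mul_comm]
  | succ m ih =>
    intro n k
    show n * ∑ r ∈ Icc 1 n, S m r k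
      = (∑ r ∈ Icc 1 n, S m r (k + 1)) + (m + 1) * ∑ r ∈ Icc 1 (n - 1), S (m + 1) r k
    rw [abelAux (fun r => S m r k) n]
    have h1 : ∑ r ∈ Icc 1 n, r * S m r k
        = (∑ r ∈ Icc 1 n, S m r (k + 1)) + m * ∑ r ∈ Icc 1 n, S (m + 1) (r - 1) k := by
      rw [Finset.mul_sum, ← Finset.sum_add_distrib]
      exact Finset.sum_congr rfl fun r _ => ih r k
    have h2 : ∑ r ∈ Icc 1 n, S (m + 1) (r - 1) k = ∑ r ∈ Icc 1 (n - 1), S (m + 1) r k :=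
      shiftAux (fun r => S (m + 1) r k)
        (by show S (m + 1) 0 k = 0; rw [S.eq_def]; simp) n
    have h3 : ∀ r, (∑ s ∈ Icc 1 r, S m s k) = S (m + 1) r k := fun r => rfl
    rw [h1, h2]
    simp only [h3]
    ring

theorem stmt2 (m n k : ℕ) (hm : 1 ≤ m) (hn : 2 ≤ n) :
    n * S m n k = S m n (k + 1) + m * S (m + 1) (n - 1) k := keyL m n k
end

section
/- For all n, k ∈ ℕ: (n+1)^k = Σ_{i=0}^{k} C(n, i) · μ(k, i). -/
open Finset Nat

def saras : ℕ → ℕ → ℕ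
  | _, 0 => 1
  | 0, _ + 1 => 0
  | k + 1, r + 1 =>
      if r + 1 ≤ k + 1 then (r + 1) * saras k r + (r + 2) * saras k (r + 1) else 0

lemma saras_zero_of_lt : ∀ {k r : ℕ}, k < r → saras k r = 0 := by
  intro k r h
  match k, r with
  | _, 0 => omega
  | 0, r + 1 => rfl
  | k + 1, r + 1 =>
    have : ¬ (r + 1 ≤ k + 1) := by omega
    simp [saras, this]

theorem stmt5 (n k : ℕ) :
    (n + 1) ^ k = ∑ i ∈ Finset.range (k + 1), Nat.choose n i * saras k i := by
  induction k with
  | zero => simp [saras]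
  | succ k ih =>
    have hchoose : ∀ i : ℕ, Nat.choose n i * saras k i * (n + 1) =
        (i + 1) * Nat.choose n i * saras k i + (i + 1) * Nat.choose n (i + 1) * saras k i := by
      intro i
      have h1 : (n + 1) * Nat.choose n i = Nat.choose (n + 1) (i + 1) * (i + 1) :=
        Nat.add_one_mul_choose_eq n i
      have h2 : Nat.choose (n + 1) (i + 1) = Nat.choose n i + Nat.choose n (i + 1) :=
        Nat.choose_succ_succ n i
      calc Nat.choose n i * saras k i * (n + 1)
          = ((n + 1) * Nat.choose n i) * saras k i := by ring
        _ = (Nat.choose (n + 1) (i + 1) * (i + 1)) * saras k i := by rw [h1]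
        _ = ((Nat.choose n i + Nat.choose n (i + 1)) * (i + 1)) * saras k i := by rw [h2]
        _ = _ := by ring
    calc (n + 1) ^ (k + 1)
        = (∑ i ∈ Finset.range (k + 1), Nat.choose n i * saras k i) * (n + 1) := by
          rw [pow_succ, ih]
      _ = ∑ i ∈ Finset.range (k + 1), (Nat.choose n i * saras k i * (n + 1)) :=
          Finset.sum_mul _ _ _
      _ = ∑ i ∈ Finset.range (k + 1),
            ((i + 1) * Nat.choose n i * saras k i + (i + 1) * Nat.choose n (i + 1) * saras k i) :=
          Finset.sum_congr rfl (fun i _ => hchoose i)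
      _ = (∑ i ∈ Finset.range (k + 1), (i + 1) * Nat.choose n i * saras k i)
          + ∑ i ∈ Finset.range (k + 1), (i + 1) * Nat.choose n (i + 1) * saras k i :=
          Finset.sum_add_distrib
      _ = ((∑ i ∈ Finset.range k, (i + 2) * Nat.choose n (i + 1) * saras k (i + 1)) + 1)
          + ∑ i ∈ Finset.range (k + 1), (i + 1) * Nat.choose n (i + 1) * saras k i := by
          rw [Finset.sum_range_succ']
          simp [saras]
      _ = ((∑ i ∈ Finset.range (k + 1), (i + 2) * Nat.choose n (i + 1) * saras k (i + 1)) + 1)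
          + ∑ i ∈ Finset.range (k + 1), (i + 1) * Nat.choose n (i + 1) * saras k i := by
          rw [Finset.sum_range_succ (fun i => (i + 2) * Nat.choose n (i + 1) * saras k (i + 1))]
          rw [saras_zero_of_lt (by omega : k < k + 1)]
          ring
      _ = (∑ i ∈ Finset.range (k + 1),
            Nat.choose n (i + 1) * ((i + 1) * saras k i + (i + 2) * saras k (i + 1))) + 1 := by
          have h : ∀ i ∈ Finset.range (k + 1),
              Nat.choose n (i + 1) * ((i + 1) * saras k i + (i + 2) * saras k (i + 1)) =
              (i + 2) * Nat.choose n (i + 1) * saras k (i + 1)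
                + (i + 1) * Nat.choose n (i + 1) * saras k i := fun i _ => by ring
          rw [Finset.sum_congr rfl h, Finset.sum_add_distrib]
          ring
      _ = (∑ i ∈ Finset.range (k + 1), Nat.choose n (i + 1) * saras (k + 1) (i + 1)) + 1 := by
          refine congrArg (· + 1) (Finset.sum_congr rfl (fun i hi => ?_))
          have : i + 1 ≤ k + 1 := by
            have := Finset.mem_range.mp hi; omega
          simp [saras, this]
      _ = ∑ i ∈ Finset.range (k + 2), Nat.choose n i * saras (k + 1) i := by
          conv_rhs => rw [Finset.sum_range_succ']
          have : saras (k + 1) 0 = 1 := rfl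
          simp [this]
end

section
/- For all m ∈ ℕ, n ≥ 1, k ∈ ℕ, the m-nested power sum satisfies S(m, n, k) = Σ_{i=0}^{k} C(n + m − 1, m + i) · μ(k, i). -/
open Finset Nat

lemma saras_zero (k : ℕ) : saras k 0 = 1 := by cases k <;> rfl

lemma saras_eq_zero : ∀ k r : ℕ, k < r → saras k r = 0
  | _, 0, h => by omega
  | 0, r + 1, _ => rfl
  | k + 1, r + 1, h => by
      rw [saras, if_neg (by omega)]

lemma saras_succ (k r : ℕ) (h : r + 1 ≤ k + 1) :
    saras (k + 1) (r + 1) = (r + 1) * saras k r + (r + 2) * saras k (r + 1) := by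
  rw [saras, if_pos h]

lemma hock (n m c : ℕ) : ∑ j ∈ Finset.range n, Nat.choose (j + m) (m + c) =
    Nat.choose (n + m) (m + c + 1) := by
  induction n with
  | zero =>
      rw [Finset.range_zero, Finset.sum_empty,
        Nat.choose_eq_zero_of_lt (show 0 + m < m + c + 1 by omega)]
  | succ n ih =>
      rw [Finset.sum_range_succ, ih, show n + 1 + m = (n + m) + 1 from by ring,
        Nat.choose_succ_succ' (n + m) (m + c)]
      ring

lemma base_case (t k : ℕ) : (t + 1) ^ k =
    ∑ i ∈ Finset.range (k + 1), Nat.choose t i * saras k i := by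
  induction k with
  | zero => simp [saras_zero]
  | succ k ih =>
      have key : ∀ i ∈ Finset.range (k + 2), Nat.choose t i * saras (k + 1) i
          = Nat.choose t i * (i * saras k (i - 1) + (i + 1) * saras k i) := by
        intro i hi
        simp only [Finset.mem_range] at hi
        match i with
        | 0 => simp [saras_zero]
        | j + 1 => rw [saras_succ k j (by omega)]; simp
      rw [Finset.sum_congr rfl key]
      have expand : ∀ i : ℕ, Nat.choose t i * (i * saras k (i - 1) + (i + 1) * saras k i)
          = i * Nat.choose t i * saras k (i - 1) + (i + 1) * Nat.choose t i * saras k i := by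
        intro i; ring
      simp only [expand]
      rw [Finset.sum_add_distrib]
      -- first sum: reindex
      rw [Finset.sum_range_succ' (fun i => i * Nat.choose t i * saras k (i - 1)) (k + 1)]
      simp only [Nat.add_sub_cancel, Nat.zero_mul, Nat.mul_zero, Nat.zero_mul, add_zero]
      -- second sum: drop last term
      rw [Finset.sum_range_succ (fun i => (i + 1) * Nat.choose t i * saras k i) (k + 1)]
      rw [saras_eq_zero k (k + 1) (by omega)]
      simp only [Nat.mul_zero, add_zero]
      rw [← Finset.sum_add_distrib]
      have comb : ∀ j : ℕ, (j + 1) * Nat.choose t (j + 1) * saras k j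
          + (j + 1) * Nat.choose t j * saras k j = (t + 1) * (Nat.choose t j * saras k j) := by
        intro j
        have h := Nat.add_one_mul_choose_eq t j
        have h2 : Nat.choose (t + 1) (j + 1) = Nat.choose t j + Nat.choose t (j + 1) :=
          Nat.choose_succ_succ t j
        calc (j + 1) * Nat.choose t (j + 1) * saras k j
              + (j + 1) * Nat.choose t j * saras k j
            = (Nat.choose t j + Nat.choose t (j + 1)) * (j + 1) * saras k j := by ring
          _ = Nat.choose (t + 1) (j + 1) * (j + 1) * saras k j := by rw [← h2]
          _ = ((t + 1) * Nat.choose t j) * saras k j := by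
              rw [show Nat.choose (t+1) (j+1) * (j+1) = (t+1) * Nat.choose t j from h.symm]
          _ = (t + 1) * (Nat.choose t j * saras k j) := by ring
      rw [Finset.sum_congr rfl (fun j _ => comb j), ← Finset.mul_sum, ← ih, pow_succ]
      ring

theorem stmt6 (m n k : ℕ) (hn : 1 ≤ n) :
    S m n k = ∑ i ∈ Finset.range (k + 1), Nat.choose (n + m - 1) (m + i) * saras k i := by
  induction m generalizing n with
  | zero =>
      obtain ⟨t, rfl⟩ : ∃ t, n = t + 1 := ⟨n - 1, by omega⟩
      simp only [S, Nat.add_zero, Nat.add_sub_cancel, Nat.zero_add]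
      exact base_case t k
  | succ m ih =>
      rw [S]
      have step : ∀ r ∈ Finset.Icc 1 n, S m r k
          = ∑ i ∈ Finset.range (k + 1), Nat.choose (r - 1 + m) (m + i) * saras k i := by
        intro r hr
        simp only [Finset.mem_Icc] at hr
        rw [ih r hr.1]
        congr 1
        ext i
        congr 2
        omega
      rw [Finset.sum_congr rfl step, Finset.sum_comm]
      apply Finset.sum_congr rfl
      intro i _
      rw [← Finset.sum_mul]
      congr 1
      have : ∑ r ∈ Finset.Icc 1 n, Nat.choose (r - 1 + m) (m + i)
          = ∑ j ∈ Finset.range n, Nat.choose (j + m) (m + i) := by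
        rw [Finset.range_eq_Ico]
        refine Finset.sum_nbij' (fun r => r - 1) (fun j => j + 1) ?_ ?_ ?_ ?_ ?_
        · intro a ha; simp only [Finset.mem_Icc] at ha; simp only [Finset.mem_Ico]; omega
        · intro a ha; simp only [Finset.mem_Ico] at ha; simp only [Finset.mem_Icc]; omega
        · intro a ha; simp only [Finset.mem_Icc] at ha; omega
        · intro a ha; simp only [Finset.mem_Ico] at ha; omega
        · intro a ha; simp only [Finset.mem_Icc] at ha; congr 1
      rw [this, hock]
      congr 1 <;> omega
end
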